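/- Let Δ be a natural number with Δ ≥ 25 and let C be a real number with C ≥ (e/(e-1))·Δ. Let E' be a real number with -2 ≤ E' ≤ 0, and let ε₁, …, ε_Δ be real numbers with ε_i ≥ E' for all i. Then 1 − ∏_{i=1}^{Δ} (1 + ε_i/(C-i)) ≤ 1 − (1 − 100/C)·exp(E'·log(C/(C-Δ))). -/

import Mathlib

/-- `log(1-x) ≥ -x - 2x²` for `x ≤ 1/2`. -/
lemma aux_log_one_sub (x : ℝ) (hx : x ≤ 1/2) :
    -x - 2*x^2 ≤ Real.log (1 - x) := by
  have h1 : (0:ℝ) < 1 - x := by linarith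
  have h2 := Real.one_sub_inv_le_log_of_pos h1
  have h3 : (1-x)⁻¹ ≤ 1 + x + 2*x^2 := by
    rw [inv_le_iff_one_le_mul₀ h1]
    nlinarith
  linarith

/-- Pointwise bound: for `u ≥ 20`, `0 ≤ s ≤ 2`,
`-s·(log(u+1) - log u) - 10/u² ≤ log(1 - s/u)`. -/
lemma aux_pointwise (u s : ℝ) (hu : 20 ≤ u) (hs0 : 0 ≤ s) (hs2 : s ≤ 2) :
    -s * (Real.log (u+1) - Real.log u) - 10/u^2 ≤ Real.log (1 - s/u) := by
  have hu0 : (0:ℝ) < u := by linarith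
  have hx : s/u ≤ 1/2 := by rw [div_le_iff₀ hu0]; linarith
  have h1 := aux_log_one_sub (s/u) hx
  have h2 : Real.log (u+1) - Real.log u = Real.log ((u+1)/u) :=
    (Real.log_div (by linarith) (by linarith)).symm
  have h3 : 1 - ((u+1)/u)⁻¹ ≤ Real.log ((u+1)/u) :=
    Real.one_sub_inv_le_log_of_pos (by positivity)
  have h4 : ((u+1)/u)⁻¹ = u/(u+1) := by rw [inv_div]
  have h5 : 1/u - 1/u^2 ≤ 1 - u/(u+1) := by
    have heq : 1 - u/(u+1) = 1/(u+1) := by field_simp; ring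
    rw [heq, div_sub_div _ _ (by positivity) (by positivity),
      div_le_div_iff₀ (by positivity) (by positivity)]
    ring_nf
    nlinarith
  have hlogd : 1/u - 1/u^2 ≤ Real.log (u+1) - Real.log u := by
    rw [h2]; rw [h4] at h3; linarith
  have h6 : -s * (Real.log (u+1) - Real.log u) ≤ -s*(1/u - 1/u^2) :=
    mul_le_mul_of_nonpos_left hlogd (by linarith)
  have h8 : -s*(1/u - 1/u^2) - 10/u^2 ≤ -(s/u) - 2*(s/u)^2 := by
    have hkey : (0:ℝ) ≤ 10 - s - 2*s^2 := by nlinarith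
    rw [← sub_nonneg]
    have heq : (-(s/u) - 2*(s/u)^2) - (-s*(1/u - 1/u^2) - 10/u^2)
        = (10 - s - 2*s^2)/u^2 := by field_simp; ring
    rw [heq]
    exact div_nonneg hkey (by positivity)
  linarith

set_option maxHeartbeats 1000000 in
/-- Single-level error bound, upper-bound half: with `Δ ≥ 25`, `C ≥ (e/(e-1))·Δ`,
`-2 ≤ E' ≤ 0` and `ε_i ≥ E'` for `i = 1, …, Δ`, we have
`1 − ∏_{i=1}^{Δ} (1 + ε_i/(C-i)) ≤ 1 − (1 − 100/C)·exp(E'·log(C/(C-Δ)))`. -/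
theorem stmt_8 (Δ : ℕ) (hΔ : 25 ≤ Δ) (C : ℝ)
    (hC : Real.exp 1 / (Real.exp 1 - 1) * Δ ≤ C)
    (E' : ℝ) (hE'lo : -2 ≤ E') (hE'hi : E' ≤ 0) (ε : ℕ → ℝ)
    (hlo : ∀ i ∈ Finset.Icc 1 Δ, E' ≤ ε i) :
    1 - ∏ i ∈ Finset.Icc 1 Δ, (1 + ε i / (C - i)) ≤
      1 - (1 - 100 / C) * Real.exp (E' * Real.log (C / (C - Δ))) := by
  have he1 : (2.7182818283 : ℝ) < Real.exp 1 := Real.exp_one_gt_d9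
  have he2 : Real.exp 1 < 2.7182818286 := Real.exp_one_lt_d9
  have he0 : (0:ℝ) < Real.exp 1 := Real.exp_pos 1
  have he10 : (0:ℝ) < Real.exp 1 - 1 := by linarith
  have heΔ : (25:ℝ) ≤ (Δ:ℝ) := by exact_mod_cast hΔ
  have hfrac : (1.58:ℝ) ≤ Real.exp 1 / (Real.exp 1 - 1) := by
    rw [le_div_iff₀ he10]; nlinarith
  have hC40 : (39.5:ℝ) ≤ C := by
    nlinarith [mul_le_mul hfrac heΔ (by norm_num : (0:ℝ) ≤ 25) (by positivity :
      (0:ℝ) ≤ Real.exp 1 / (Real.exp 1 - 1))]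
  have hC0 : (0:ℝ) < C := by linarith
  have hΔC : (Δ:ℝ) ≤ (Real.exp 1 - 1)/Real.exp 1 * C := by
    have h := mul_le_mul_of_nonneg_left hC (le_of_lt (div_pos he10 he0))
    have heq : (Real.exp 1 - 1)/Real.exp 1 * (Real.exp 1/(Real.exp 1 - 1) * Δ) = (Δ:ℝ) := by
      field_simp
    linarith [heq ▸ h]
  have hCd : C / Real.exp 1 ≤ C - Δ := by
    have h : (Real.exp 1 - 1)/Real.exp 1 * C = C - C/Real.exp 1 := by field_simp
    linarith [h ▸ hΔC]
  have hCd14 : (14:ℝ) ≤ C - Δ := by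
    have : (14:ℝ) ≤ C / Real.exp 1 := by rw [le_div_iff₀ he0]; nlinarith
    linarith
  have hCdpos : (0:ℝ) < C - Δ := by linarith
  have hle : ∀ i ∈ Finset.Icc 1 Δ, (C - Δ) ≤ C - (i:ℝ) := by
    intro i hi
    rw [Finset.mem_Icc] at hi
    have : (i:ℝ) ≤ (Δ:ℝ) := by exact_mod_cast hi.2
    linarith
  have hfacE : ∀ i ∈ Finset.Icc 1 Δ, (1:ℝ)/2 ≤ 1 + E'/(C - (i:ℝ)) := by
    intro i hi
    have h1 := hle i hi
    have h2 : (0:ℝ) < C - (i:ℝ) := by linarith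
    have h3 : (-1/2 : ℝ) ≤ E'/(C - (i:ℝ)) :=
      (le_div_iff₀ h2).mpr (by nlinarith)
    linarith
  have hmono : ∀ i ∈ Finset.Icc 1 Δ, 1 + E'/(C - (i:ℝ)) ≤ 1 + ε i/(C - (i:ℝ)) := by
    intro i hi
    have h2 : (0:ℝ) < C - (i:ℝ) := by linarith [hle i hi]
    have h3 := hlo i hi
    gcongr
  have hprodmono : ∏ i ∈ Finset.Icc 1 Δ, (1 + E'/(C - (i:ℝ))) ≤
      ∏ i ∈ Finset.Icc 1 Δ, (1 + ε i/(C - (i:ℝ))) :=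
    Finset.prod_le_prod (fun i hi => by linarith [hfacE i hi]) hmono
  rcases le_or_gt C 100 with hc | hc
  · -- trivial case: RHS factor nonpositive
    have h1 : 1 - 100/C ≤ 0 := by
      rw [sub_nonpos, le_div_iff₀ hC0]; linarith
    have h2 : (1 - 100/C) * Real.exp (E' * Real.log (C / (C - Δ))) ≤ 0 :=
      mul_nonpos_of_nonpos_of_nonneg h1 (Real.exp_pos _).le
    have h3 : (0:ℝ) < ∏ i ∈ Finset.Icc 1 Δ, (1 + ε i/(C - (i:ℝ))) :=
      Finset.prod_pos (fun i hi => by linarith [hfacE i hi, hmono i hi])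
    linarith
  · -- main case
    have hCd36 : (36:ℝ) ≤ C - Δ := by
      have : (36:ℝ) ≤ C / Real.exp 1 := by rw [le_div_iff₀ he0]; nlinarith
      linarith
    -- conversion Icc → range
    have hconv : ∀ g : ℕ → ℝ, ∑ i ∈ Finset.Icc 1 Δ, g i = ∑ j ∈ Finset.range Δ, g (j+1) := by
      intro g
      rw [← Finset.Ico_add_one_right_eq_Icc, Finset.sum_Ico_eq_sum_range]
      norm_num
      exact Finset.sum_congr rfl fun j _ => by rw [Nat.add_comm]
    -- pointwise log bound
    set f : ℕ → ℝ := fun j => Real.log (C - (j:ℝ)) with hf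
    have hpt : ∀ j ∈ Finset.range Δ, E' * (f j - f (j+1)) - 10/(C - ((j:ℝ)+1))^2 ≤
        Real.log (1 + E'/(C - ((j:ℝ)+1))) := by
      intro j hj
      rw [Finset.mem_range] at hj
      have hjΔ : ((j:ℝ)+1) ≤ (Δ:ℝ) := by exact_mod_cast Nat.succ_le_of_lt hj
      have hu : (20:ℝ) ≤ C - ((j:ℝ)+1) := by linarith
      have := aux_pointwise (C - ((j:ℝ)+1)) (-E') hu (by linarith) (by linarith)
      have e1 : C - ((j:ℝ)+1) + 1 = C - (j:ℝ) := by ring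
      have e2 : 1 - (-E')/(C - ((j:ℝ)+1)) = 1 + E'/(C - ((j:ℝ)+1)) := by ring
      rw [e1, e2] at this
      have e3 : f (j+1) = Real.log (C - ((j:ℝ)+1)) := by simp only [hf]; push_cast; ring_nf
      rw [e3]
      calc E' * (f j - Real.log (C - ((j:ℝ)+1))) - 10/(C - ((j:ℝ)+1))^2
          = -(-E') * (Real.log (C - (j:ℝ)) - Real.log (C - ((j:ℝ)+1))) - 10/(C - ((j:ℝ)+1))^2 := by
            simp only [hf]; ring
        _ ≤ _ := by rw [show -(-E') = E' by ring] at *; linarith [this]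
    have h100 : (0:ℝ) < 1 - 100/C := by
      rw [sub_pos, div_lt_one hC0]; exact hc
    have htel : ∑ j ∈ Finset.range Δ, (f j - f (j+1)) = f 0 - f Δ :=
      Finset.sum_range_sub' f Δ
    have hL : Real.log (C/(C-Δ)) = f 0 - f Δ := by
      simp only [hf]
      push_cast
      rw [sub_zero, Real.log_div hC0.ne' hCdpos.ne']
    have hsplit : ∑ j ∈ Finset.range Δ, (E' * (f j - f (j+1)) - 10/(C - ((j:ℝ)+1))^2)
        = E' * (f 0 - f Δ) - ∑ j ∈ Finset.range Δ, 10/(C - ((j:ℝ)+1))^2 := by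
      rw [Finset.sum_sub_distrib, ← Finset.mul_sum, htel]
    have hT : ∑ j ∈ Finset.range Δ, 10/(C - ((j:ℝ)+1))^2 ≤ (Δ:ℝ) * (10/(C-Δ)^2) := by
      calc ∑ j ∈ Finset.range Δ, 10/(C - ((j:ℝ)+1))^2
          ≤ ∑ _j ∈ Finset.range Δ, 10/(C-Δ)^2 := by
            apply Finset.sum_le_sum
            intro j hj
            rw [Finset.mem_range] at hj
            have hjΔ : ((j:ℝ)+1) ≤ (Δ:ℝ) := by exact_mod_cast Nat.succ_le_of_lt hj
            have h1 : C - Δ ≤ C - ((j:ℝ)+1) := by linarith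
            gcongr
        _ = (Δ:ℝ) * (10/(C-Δ)^2) := by
            rw [Finset.sum_const, Finset.card_range, nsmul_eq_mul]
    have hTbound : (Δ:ℝ) * (10/(C-Δ)^2) ≤ 100/C := by
      have e : (Δ:ℝ)*(10/(C-Δ)^2) = (10*Δ)/(C-Δ)^2 := by ring
      rw [e, div_le_div_iff₀ (by positivity) hC0]
      have hB : (Δ:ℝ)*Real.exp 1 ≤ (Real.exp 1 - 1)*C := by
        rw [div_mul_eq_mul_div] at hΔC
        have := (le_div_iff₀ he0).mp hΔC
        linarith
      have hA : C^2 ≤ (C-Δ)^2 * Real.exp 1^2 := by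
        have h := pow_le_pow_left₀ (by positivity) hCd 2
        rw [div_pow] at h
        exact (div_le_iff₀ (by positivity)).mp h
      have h272 : Real.exp 1 < 2.72 := by linarith
      have p1 : Real.exp 1 * Real.exp 1 < Real.exp 1 * 2.72 :=
        mul_lt_mul_of_pos_left h272 he0
      have p2 : Real.exp 1 * 2.72 < 2.72*2.72 :=
        mul_lt_mul_of_pos_right h272 (by norm_num)
      have h3 : Real.exp 1*(Real.exp 1 - 1) ≤ 10 := by nlinarith [p1, p2]
      have s1 : (Δ:ℝ)*Real.exp 1*C ≤ (Real.exp 1 - 1)*C^2 := by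
        nlinarith [mul_le_mul_of_nonneg_right hB hC0.le]
      have s2 : (Real.exp 1 - 1)*C^2 ≤ (Real.exp 1 - 1)*((C-Δ)^2*Real.exp 1^2) :=
        mul_le_mul_of_nonneg_left hA (by linarith)
      have s12 : (Δ:ℝ)*C*Real.exp 1 ≤ (Real.exp 1 - 1)*Real.exp 1*(C-Δ)^2*Real.exp 1 := by
        nlinarith [s1, s2]
      have s3 : (Δ:ℝ)*C ≤ (Real.exp 1 - 1)*Real.exp 1*(C-Δ)^2 :=
        le_of_mul_le_mul_right s12 he0
      nlinarith [s3, mul_le_mul_of_nonneg_right h3 (sq_nonneg (C-Δ))]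
    have hlog100 : Real.log (1 - 100/C) ≤ -(100/C) := by
      have := Real.log_le_sub_one_of_pos h100
      linarith
    have hS : Real.log (1-100/C) + E' * Real.log (C/(C-Δ)) ≤
        ∑ i ∈ Finset.Icc 1 Δ, Real.log (1 + E'/(C - (i:ℝ))) := by
      rw [hconv (fun i => Real.log (1 + E'/(C - (i:ℝ))))]
      have hcast : ∀ j ∈ Finset.range Δ, Real.log (1 + E'/(C - ((j+1:ℕ):ℝ)))
          = Real.log (1 + E'/(C - ((j:ℝ)+1))) := by
        intro j _
        push_cast
        ring_nf
      rw [Finset.sum_congr rfl hcast]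
      calc Real.log (1-100/C) + E' * Real.log (C/(C-Δ))
          ≤ E' * (f 0 - f Δ) - ∑ j ∈ Finset.range Δ, 10/(C - ((j:ℝ)+1))^2 := by
            rw [← hL]
            nlinarith [hT, hTbound, hlog100]
        _ = ∑ j ∈ Finset.range Δ, (E' * (f j - f (j+1)) - 10/(C - ((j:ℝ)+1))^2) :=
            hsplit.symm
        _ ≤ _ := Finset.sum_le_sum hpt
    have hprodexp : ∏ i ∈ Finset.Icc 1 Δ, (1 + E'/(C - (i:ℝ)))
        = Real.exp (∑ i ∈ Finset.Icc 1 Δ, Real.log (1 + E'/(C - (i:ℝ)))) := by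
      rw [Real.exp_sum]
      exact Finset.prod_congr rfl fun i hi =>
        (Real.exp_log (lt_of_lt_of_le (by norm_num) (hfacE i hi))).symm
    have hfin : (1-100/C) * Real.exp (E' * Real.log (C/(C-Δ))) ≤
        ∏ i ∈ Finset.Icc 1 Δ, (1 + E'/(C - (i:ℝ))) := by
      rw [hprodexp]
      nth_rewrite 1 [← Real.exp_log h100]
      rw [← Real.exp_add]
      exact Real.exp_le_exp.mpr hS
    linarith [hprodmono, hfin]
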